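/- Let H be a separable complex Hilbert space, C a conjugation on H, and T a C-normal bounded linear operator on H. Then S₁ = T*T − TT* is C-skew-symmetric (i.e. C S₁* C = −S₁) and S₂ = T*T + TT* is C-symmetric (i.e. S₂* = C S₂ C). -/

import Mathlib

open scoped InnerProductSpace
open ContinuousLinearMap TopologicalSpace

def Conjugation {K : Type*} [NormedAddCommGroup K] [InnerProductSpace ℂ K] (C : K → K) : Prop :=
  (∀ (a : ℂ) (x y : K), C (a • x + y) = (starRingEnd ℂ) a • C x + C y) ∧
  (∀ x, C (C x) = x) ∧
  (∀ x y : K, ⟪C x, C y⟫_ℂ = ⟪y, x⟫_ℂ)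

def CNormal {K : Type*} [NormedAddCommGroup K] [InnerProductSpace ℂ K] [CompleteSpace K]
    (C : K → K) (T : K →L[ℂ] K) : Prop :=
  ∀ x, C (adjoint T (T (C x))) = T (adjoint T x)

theorem stmt_4 {H : Type*} [NormedAddCommGroup H] [InnerProductSpace ℂ H] [CompleteSpace H]
    [SeparableSpace H]
    (C : H → H) (hC : Conjugation C)
    (T : H →L[ℂ] H) (hT : CNormal C T) :
    (∀ x, C (adjoint (adjoint T * T - T * adjoint T) (C x)) =
      -((adjoint T * T - T * adjoint T) x)) ∧
    (∀ x, adjoint (adjoint T * T + T * adjoint T) x =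
      C ((adjoint T * T + T * adjoint T) (C x))) := by
  obtain ⟨hlin, hinv, hip⟩ := hC
  have hadd : ∀ x y, C (x + y) = C x + C y := by
    intro x y; simpa using hlin 1 x y
  have hzero : C 0 = 0 := by
    have h := hadd 0 0
    simp only [add_zero] at h
    have := congrArg (· - C 0) h
    simpa using this.symm
  have hsmul : ∀ (a : ℂ) (x : H), C (a • x) = (starRingEnd ℂ) a • C x := by
    intro a x; simpa [hzero] using hlin a x 0
  have hsub : ∀ x y, C (x - y) = C x - C y := by
    intro x y
    have := hadd (x - y) y
    simp only [sub_add_cancel] at this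
    have h2 := congrArg (· - C y) this
    simpa using h2.symm
  have h1 : ∀ x, C (adjoint T (T (C x))) = T (adjoint T x) := hT
  have h2 : ∀ x, C (T (adjoint T (C x))) = adjoint T (T x) := by
    intro x
    have h := hT (C x)
    rw [hinv] at h
    calc C (T (adjoint T (C x))) = C (C (C (T (adjoint T (C x))))) := by rw [hinv]
      _ = C (C (adjoint T (T x))) := by rw [← h, hinv]
      _ = adjoint T (T x) := hinv _
  have hS1 : adjoint (adjoint T * T - T * adjoint T) = adjoint T * T - T * adjoint T := by
    simp [mul_def, adjoint_comp, adjoint_adjoint]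
  have hS2 : adjoint (adjoint T * T + T * adjoint T) = adjoint T * T + T * adjoint T := by
    simp [mul_def, adjoint_comp, adjoint_adjoint]
  constructor
  · intro x
    rw [hS1]
    simp only [sub_apply, mul_def, coe_comp', Function.comp_apply]
    rw [hsub, h1, h2]
    abel
  · intro x
    rw [hS2]
    simp only [add_apply, mul_def, coe_comp', Function.comp_apply]
    rw [hadd, h1, h2]
    abel
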